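/- arXiv:2301.11576 — 2 statements merged into one kernel-verified Lean document; each statement's English description precedes it below -/
import Mathlib

section
/- Let (X, μ, T) be an ergodic probability measure-preserving system and (φ_k)_{k ≥ 1} a sequence of functions in L^1(X, μ) with ∑_{k≥1} ‖φ_k‖_1 < ∞. Then for μ-a.e. x, lim_n (1/n) ∑_{k=1}^{n-1} ∑_{j=0}^{n-k-1} φ_k(T^j x) = ∑_{k=1}^∞ ∫ φ_k dμ. -/
open Finset MeasureTheory Filter

section BirkhoffDev

variable {X : Type*} [MeasurableSpace X] {μ : MeasureTheory.Measure X} {T : X → X} {f : X → ℝ}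

/-- Running maximum `max_{0 ≤ n ≤ N} S_n f x` of Birkhoff sums (with `S_0 = 0`). -/
noncomputable def ccMaxS (T : X → X) (f : X → ℝ) : ℕ → X → ℝ
  | 0 => fun _ => 0
  | N + 1 => fun x => max (ccMaxS T f N x) (birkhoffSum T f (N + 1) x)

lemma ccMaxS_nonneg (N : ℕ) (x : X) : 0 ≤ ccMaxS T f N x := by
  induction N with
  | zero => simp [ccMaxS]
  | succ N ih => simp only [ccMaxS]; exact le_max_of_le_left ih

lemma ccMaxS_le_succ (N : ℕ) (x : X) : ccMaxS T f N x ≤ ccMaxS T f (N + 1) x := by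
  simp only [ccMaxS]; exact le_max_left _ _

lemma ccMaxS_mono (x : X) : Monotone fun N => ccMaxS T f N x :=
  monotone_nat_of_le_succ fun N => ccMaxS_le_succ N x

lemma birkhoffSum_le_ccMaxS : ∀ {N n : ℕ}, n ≤ N → ∀ x : X,
    birkhoffSum T f n x ≤ ccMaxS T f N x := by
  intro N
  induction N with
  | zero =>
    intro n hn x
    have : n = 0 := Nat.le_zero.1 hn
    subst this
    simp [ccMaxS, birkhoffSum_zero]
  | succ N ih =>
    intro n hn x
    rcases Nat.eq_or_lt_of_le hn with h | h
    · subst h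
      simp only [ccMaxS]
      exact le_max_right _ _
    · simp only [ccMaxS]
      exact le_max_of_le_left (ih (Nat.lt_succ_iff.1 h) x)

lemma ccMaxS_pos_exists : ∀ {N : ℕ} {x : X}, 0 < ccMaxS T f N x →
    ∃ n, 1 ≤ n ∧ n ≤ N ∧ ccMaxS T f N x = birkhoffSum T f n x := by
  intro N
  induction N with
  | zero => intro x h; simp [ccMaxS] at h
  | succ N ih =>
    intro x h
    by_cases hc : ccMaxS T f N x < birkhoffSum T f (N + 1) x
    · refine ⟨N + 1, Nat.succ_le_succ (Nat.zero_le _), le_refl _, ?_⟩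
      simp only [ccMaxS]
      exact max_eq_right hc.le
    · push_neg at hc
      have h' : ccMaxS T f (N + 1) x = ccMaxS T f N x := by
        simp only [ccMaxS]; exact max_eq_left hc
      rw [h'] at h ⊢
      obtain ⟨n, h1, h2, h3⟩ := ih h
      exact ⟨n, h1, h2.trans (Nat.le_succ N), h3⟩

lemma measurable_birkhoffSum (hT : Measurable T) (hf : Measurable f) (n : ℕ) :
    Measurable (birkhoffSum T f n) := by
  unfold birkhoffSum
  exact Finset.measurable_sum _ fun i _ => hf.comp (hT.iterate i)

lemma integrable_comp_iterate (hT : MeasurePreserving T μ μ) (hf : Integrable f μ) (i : ℕ) :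
    Integrable (fun x => f (T^[i] x)) μ :=
  ((hT.iterate i).integrable_comp hf.aestronglyMeasurable).2 hf

lemma integrable_birkhoffSum (hT : MeasurePreserving T μ μ) (hf : Integrable f μ) (n : ℕ) :
    Integrable (birkhoffSum T f n) μ := by
  unfold birkhoffSum
  exact integrable_finset_sum (range n) fun i _ => integrable_comp_iterate hT hf i

lemma measurable_ccMaxS (hT : Measurable T) (hf : Measurable f) (N : ℕ) :
    Measurable (ccMaxS T f N) := by
  induction N with
  | zero => simpa [ccMaxS] using measurable_const
  | succ N ih =>
    have := ih.max (measurable_birkhoffSum hT hf (N + 1))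
    simpa [ccMaxS] using this

lemma integrable_ccMaxS (hT : MeasurePreserving T μ μ) (hf : Integrable f μ) (N : ℕ) :
    Integrable (ccMaxS T f N) μ := by
  induction N with
  | zero => simpa [ccMaxS] using (integrable_const (0 : ℝ) (μ := μ))
  | succ N ih =>
    have h := ih.sup (integrable_birkhoffSum hT hf (N + 1))
    have : (ccMaxS T f N ⊔ birkhoffSum T f (N + 1)) = ccMaxS T f (N + 1) := by
      funext x
      simp [ccMaxS, Pi.sup_apply]
    rwa [this] at h

/-- Garsia's maximal ergodic theorem. -/
theorem cc_maximal_ergodic (hT : MeasurePreserving T μ μ) (hf : Integrable f μ)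
    (hfm : Measurable f) (N : ℕ) :
    0 ≤ ∫ x in {x | 0 < ccMaxS T f N x}, f x ∂μ := by
  have hTm : Measurable T := hT.measurable
  set A := {x | 0 < ccMaxS T f N x} with hA
  have hMm : Measurable (ccMaxS T f N) := measurable_ccMaxS hTm hfm N
  have hAm : MeasurableSet A := measurableSet_lt measurable_const hMm
  have hMi : Integrable (ccMaxS T f N) μ := integrable_ccMaxS hT hf N
  have hMTi : Integrable (fun x => ccMaxS T f N (T x)) μ :=
    (hT.integrable_comp hMi.aestronglyMeasurable).2 hMi
  have key : ∀ x ∈ A, ccMaxS T f N x - ccMaxS T f N (T x) ≤ f x := by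
    intro x hx
    obtain ⟨n, h1, h2, h3⟩ := ccMaxS_pos_exists hx
    obtain ⟨m, rfl⟩ : ∃ m, n = m + 1 := ⟨n - 1, (Nat.succ_pred_eq_of_pos h1).symm⟩
    have hle : birkhoffSum T f m (T x) ≤ ccMaxS T f N (T x) :=
      birkhoffSum_le_ccMaxS (le_trans (Nat.le_succ m) h2) (T x)
    rw [h3, birkhoffSum_succ']
    linarith
  have h1 : ∫ x in A, (ccMaxS T f N x - ccMaxS T f N (T x)) ∂μ ≤ ∫ x in A, f x ∂μ :=
    setIntegral_mono_on (hMi.sub hMTi).integrableOn hf.integrableOn hAm key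
  have h2 : ∫ x in A, (ccMaxS T f N x - ccMaxS T f N (T x)) ∂μ
      = ∫ x in A, ccMaxS T f N x ∂μ - ∫ x in A, ccMaxS T f N (T x) ∂μ :=
    integral_sub hMi.integrableOn hMTi.integrableOn
  have h3 : ∫ x in A, ccMaxS T f N (T x) ∂μ ≤ ∫ x, ccMaxS T f N (T x) ∂μ :=
    setIntegral_le_integral hMTi (Filter.Eventually.of_forall fun x => ccMaxS_nonneg N (T x))
  have h4 : ∫ x, ccMaxS T f N (T x) ∂μ = ∫ x, ccMaxS T f N x ∂μ := by
    calc ∫ x, ccMaxS T f N (T x) ∂μ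
        = ∫ y, ccMaxS T f N y ∂(MeasureTheory.Measure.map T μ) := by
          refine (integral_map hTm.aemeasurable ?_).symm
          rw [hT.map_eq]
          exact hMm.aestronglyMeasurable
      _ = ∫ y, ccMaxS T f N y ∂μ := by rw [hT.map_eq]
  have h5 : ∫ x in A, ccMaxS T f N x ∂μ = ∫ x, ccMaxS T f N x ∂μ := by
    refine setIntegral_eq_integral_of_ae_compl_eq_zero ?_
    refine Filter.Eventually.of_forall fun x hx => ?_
    have : ¬ (0 < ccMaxS T f N x) := hx
    exact le_antisymm (not_lt.1 this) (ccMaxS_nonneg N x)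
  linarith

/-- Maximal ergodic theorem, unbounded version. -/
theorem cc_maximal_ergodic' (hT : MeasurePreserving T μ μ) (hf : Integrable f μ)
    (hfm : Measurable f) :
    0 ≤ ∫ x in {x | ∃ N, 0 < ccMaxS T f N x}, f x ∂μ := by
  have hTm : Measurable T := hT.measurable
  set A : ℕ → Set X := fun N => {x | 0 < ccMaxS T f N x} with hA
  have hAm : ∀ N, MeasurableSet (A N) := fun N =>
    measurableSet_lt measurable_const (measurable_ccMaxS hTm hfm N)
  have hmono : Monotone A := by
    intro m n hmn x hx
    exact lt_of_lt_of_le hx (ccMaxS_mono x hmn)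
  have hU : {x | ∃ N, 0 < ccMaxS T f N x} = ⋃ N, A N := by
    ext x; simp [hA]
  rw [hU]
  have htend := tendsto_setIntegral_of_monotone hAm hmono hf.integrableOn (μ := μ)
  exact ge_of_tendsto' htend fun N => cc_maximal_ergodic hT hf hfm N

lemma birkhoffSum_sub_const (c : ℝ) (n : ℕ) (x : X) :
    birkhoffSum T (fun y => f y - c) n x = birkhoffSum T f n x - n * c := by
  simp [birkhoffSum, Finset.sum_sub_distrib, mul_comm]

/-- Key step: if `∫ f < α` then a.e. the Birkhoff sums eventually stay below `α n`. -/
theorem cc_birkhoff_upper [IsProbabilityMeasure μ] (hE : Ergodic T μ) (hfm : Measurable f)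
    (hf : Integrable f μ) {α : ℝ} (hα : ∫ x, f x ∂μ < α) :
    ∀ᵐ x ∂μ, ∀ᶠ n in atTop, birkhoffSum T f n x ≤ α * n := by
  have hT : MeasurePreserving T μ μ := hE.toMeasurePreserving
  have hTm : Measurable T := hT.measurable
  have hSm : ∀ n, Measurable (birkhoffSum T f n) := measurable_birkhoffSum hTm hfm
  set α' : ℝ := (∫ x, f x ∂μ + α) / 2 with hα'
  have hα'1 : ∫ x, f x ∂μ < α' := by rw [hα']; linarith
  have hα'2 : α' < α := by rw [hα']; linarith
  set A : ℝ → Set X := fun β => {x | ∃ᶠ n in atTop, β * n < birkhoffSum T f n x} with hA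
  have hAm : ∀ β, MeasurableSet (A β) := by
    intro β
    have hrw : A β = ⋂ N : ℕ, ⋃ n : ℕ, ⋃ _ : N ≤ n, {x | β * n < birkhoffSum T f n x} := by
      ext x
      simp only [hA, Set.mem_iInter, Set.mem_iUnion, Set.mem_setOf_eq, frequently_atTop]
      constructor
      · intro h N; obtain ⟨n, hn, h'⟩ := h N; exact ⟨n, hn, h'⟩
      · intro h N; obtain ⟨n, hn, h'⟩ := h N; exact ⟨n, hn, h'⟩
    rw [hrw]
    exact MeasurableSet.iInter fun N => MeasurableSet.iUnion fun n => MeasurableSet.iUnion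
      fun _ => measurableSet_lt measurable_const (hSm n)
  have key1 : ∀ {β γ : ℝ}, γ < β → ∀ x : X, T x ∈ A β → x ∈ A γ := by
    intro β γ hγβ x hx
    have hβγ : 0 < β - γ := sub_pos.2 hγβ
    simp only [hA, Set.mem_setOf_eq, frequently_atTop] at hx ⊢
    intro a
    obtain ⟨N₀, hN₀⟩ := exists_nat_ge ((γ - f x) / (β - γ))
    obtain ⟨n, hn, hlt⟩ := hx (max a N₀)
    refine ⟨n + 1, le_trans (le_trans (le_max_left a N₀) hn) (Nat.le_succ n), ?_⟩
    have hcast : (N₀ : ℝ) ≤ (n : ℝ) := Nat.cast_le.2 (le_trans (le_max_right a N₀) hn)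
    have h1 : γ - f x ≤ (n : ℝ) * (β - γ) := by
      have := (div_le_iff₀ hβγ).1 (hN₀.trans hcast)
      linarith [this]
    rw [birkhoffSum_succ']
    push_cast
    nlinarith [hlt, h1]
  have key2 : ∀ {β γ : ℝ}, γ < β → ∀ x : X, x ∈ A β → T x ∈ A γ := by
    intro β γ hγβ x hx
    have hβγ : 0 < β - γ := sub_pos.2 hγβ
    simp only [hA, Set.mem_setOf_eq, frequently_atTop] at hx ⊢
    intro a
    obtain ⟨N₀, hN₀⟩ := exists_nat_ge ((f x - β) / (β - γ))
    obtain ⟨n, hn, hlt⟩ := hx (max (a + 1) (N₀ + 1))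
    obtain ⟨m, rfl⟩ : ∃ m, n = m + 1 :=
      ⟨n - 1, (Nat.succ_pred_eq_of_pos
        (lt_of_lt_of_le (Nat.succ_pos a) (le_trans (le_max_left _ _) hn))).symm⟩
    refine ⟨m, ?_, ?_⟩
    · have : a + 1 ≤ m + 1 := le_trans (le_max_left _ _) hn
      omega
    · have hm : (N₀ : ℝ) ≤ (m : ℝ) := by
        have : N₀ + 1 ≤ m + 1 := le_trans (le_max_right _ _) hn
        exact_mod_cast Nat.le_of_succ_le_succ this
      have h1 : f x - β ≤ (m : ℝ) * (β - γ) := by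
        have := (div_le_iff₀ hβγ).1 (hN₀.trans hm)
        linarith [this]
      rw [birkhoffSum_succ'] at hlt
      push_cast at hlt
      nlinarith [hlt, h1]
  set D : Set X := ⋃ q : ℚ, ⋃ _ : α' < (q : ℝ), A q with hD
  have hDm : MeasurableSet D :=
    MeasurableSet.iUnion fun q => MeasurableSet.iUnion fun _ => hAm q
  have hDinv : T ⁻¹' D = D := by
    ext x
    simp only [hD, Set.mem_preimage, Set.mem_iUnion]
    constructor
    · rintro ⟨q, hq, hx⟩
      obtain ⟨q', hq'1, hq'2⟩ := exists_rat_btwn hq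
      exact ⟨q', hq'1, key1 (by exact_mod_cast hq'2) x hx⟩
    · rintro ⟨q, hq, hx⟩
      obtain ⟨q', hq'1, hq'2⟩ := exists_rat_btwn hq
      exact ⟨q', hq'1, key2 (by exact_mod_cast hq'2) x hx⟩
  rcases hE.measure_self_or_compl_eq_zero hDm hDinv with hD0 | hDc0
  · -- μ D = 0 : conclude
    obtain ⟨q, hq1, hq2⟩ := exists_rat_btwn hα'2
    have hae : ∀ᵐ x ∂μ, x ∉ D := measure_eq_zero_iff_ae_notMem.mp hD0
    filter_upwards [hae] with x hx
    have hxq : x ∉ A q := fun h => hx (Set.mem_iUnion.2 ⟨q, Set.mem_iUnion.2 ⟨hq1, h⟩⟩)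
    have hev : ∀ᶠ n in atTop, ¬ ((q : ℝ) * n < birkhoffSum T f n x) := by
      simpa only [hA, Set.mem_setOf_eq, Filter.not_frequently] using hxq
    filter_upwards [hev] with n hn
    have h1 : birkhoffSum T f n x ≤ (q : ℝ) * n := not_lt.1 hn
    have h2 : (q : ℝ) * n ≤ α * n :=
      mul_le_mul_of_nonneg_right hq2.le (Nat.cast_nonneg n)
    linarith
  · -- μ Dᶜ = 0 : contradiction with the maximal ergodic theorem
    exfalso
    set g : X → ℝ := fun y => f y - α' with hg
    have hg_int : Integrable g μ := hf.sub (integrable_const α')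
    have hg_m : Measurable g := hfm.sub measurable_const
    have hg_neg : ∫ x, g x ∂μ < 0 := by
      rw [hg]
      rw [integral_sub hf (integrable_const α'), integral_const]
      simp only [probReal_univ, smul_eq_mul, one_mul]
      linarith
    set E : Set X := {x | ∃ N, 0 < ccMaxS T g N x} with hEdef
    have hDE : D ⊆ E := by
      intro x hx
      simp only [hD, Set.mem_iUnion] at hx
      obtain ⟨q, hq, hxq⟩ := hx
      simp only [hA, Set.mem_setOf_eq, frequently_atTop] at hxq
      obtain ⟨n, hn1, hlt⟩ := hxq 1
      have hn1' : (1 : ℝ) ≤ (n : ℝ) := by exact_mod_cast hn1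
      have hpos : 0 < birkhoffSum T g n x := by
        rw [hg, birkhoffSum_sub_const]
        nlinarith [hlt, hq, hn1']
      exact ⟨n, lt_of_lt_of_le hpos (birkhoffSum_le_ccMaxS (le_refl n) x)⟩
    have hE0 : μ Eᶜ = 0 := measure_mono_null (Set.compl_subset_compl.2 hDE) hDc0
    have h6 : ∫ x in E, g x ∂μ = ∫ x, g x ∂μ := by
      rw [setIntegral_congr_set (ae_eq_univ.2 hE0), setIntegral_univ]
    have h7 : 0 ≤ ∫ x in E, g x ∂μ := cc_maximal_ergodic' hT hg_int hg_m
    rw [h6] at h7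
    linarith

/-- Birkhoff's pointwise ergodic theorem, measurable case. -/
theorem cc_birkhoff_meas [IsProbabilityMeasure μ] (hE : Ergodic T μ) (hfm : Measurable f)
    (hf : Integrable f μ) :
    ∀ᵐ x ∂μ, Tendsto (fun n : ℕ => birkhoffSum T f n x / n) atTop
      (nhds (∫ x, f x ∂μ)) := by
  have hneg : ∀ (n : ℕ) (x : X), birkhoffSum T (fun y => -f y) n x = -birkhoffSum T f n x := by
    intro n x; simp [birkhoffSum]
  have hup : ∀ m : ℕ, ∀ᵐ x ∂μ, ∀ᶠ n in atTop,
      birkhoffSum T f n x ≤ (∫ x, f x ∂μ + 1 / (m + 1)) * n := fun m =>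
    cc_birkhoff_upper hE hfm hf (lt_add_of_pos_right _ (by positivity))
  have hdown : ∀ m : ℕ, ∀ᵐ x ∂μ, ∀ᶠ n in atTop,
      -birkhoffSum T f n x ≤ (-∫ x, f x ∂μ + 1 / (m + 1)) * n := by
    intro m
    have h := cc_birkhoff_upper hE hfm.neg hf.neg
      (α := -∫ x, f x ∂μ + 1 / (m + 1)) (by
        rw [show (-f) = fun x => -f x from rfl, integral_neg]
        have : (0:ℝ) < 1 / (m + 1) := by positivity
        linarith)
    filter_upwards [h] with x hx
    filter_upwards [hx] with n hn
    rw [← hneg]; exact hn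
  have hco := (ae_all_iff.2 hup).and (ae_all_iff.2 hdown)
  filter_upwards [hco] with x hx
  obtain ⟨h1, h2⟩ := hx
  rw [Metric.tendsto_atTop]
  intro ε hε
  obtain ⟨m, hm⟩ := exists_nat_one_div_lt hε
  obtain ⟨N1, hN1⟩ := eventually_atTop.1 (h1 m)
  obtain ⟨N2, hN2⟩ := eventually_atTop.1 (h2 m)
  refine ⟨max (max N1 N2) 1, fun n hn => ?_⟩
  have hn1 : N1 ≤ n := le_trans (le_trans (le_max_left _ _) (le_max_left _ _)) hn
  have hn2 : N2 ≤ n := le_trans (le_trans (le_max_right _ _) (le_max_left _ _)) hn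
  have hnn : 1 ≤ n := le_trans (le_max_right _ _) hn
  have hnR : (0 : ℝ) < n := by exact_mod_cast Nat.lt_of_lt_of_le Nat.zero_lt_one hnn
  rw [Real.dist_eq, abs_sub_lt_iff]
  have u1 := hN1 n hn1
  have u2 := hN2 n hn2
  have v1 : birkhoffSum T f n x / n ≤ ∫ x, f x ∂μ + 1 / (m + 1) := (div_le_iff₀ hnR).2 u1
  have v2 : (-birkhoffSum T f n x) / n ≤ -∫ x, f x ∂μ + 1 / (m + 1) := (div_le_iff₀ hnR).2 u2
  rw [neg_div] at v2
  constructor <;> linarith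

/-- Birkhoff's pointwise ergodic theorem. -/
theorem cc_birkhoff [IsProbabilityMeasure μ] (hE : Ergodic T μ) (hf : Integrable f μ) :
    ∀ᵐ x ∂μ, Tendsto (fun n : ℕ => birkhoffSum T f n x / n) atTop
      (nhds (∫ x, f x ∂μ)) := by
  set g : X → ℝ := hf.1.mk f with hgdef
  have hgm : Measurable g := hf.1.stronglyMeasurable_mk.measurable
  have hfg : f =ᵐ[μ] g := hf.1.ae_eq_mk
  have hg : Integrable g μ := hf.congr hfg
  have hIg : ∫ x, g x ∂μ = ∫ x, f x ∂μ := integral_congr_ae hfg.symm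
  have horb : ∀ᵐ x ∂μ, ∀ j : ℕ, f (T^[j] x) = g (T^[j] x) := by
    rw [ae_all_iff]
    intro j
    have h := (hE.toMeasurePreserving.iterate j).quasiMeasurePreserving.ae_eq_comp hfg
    exact h
  filter_upwards [horb, cc_birkhoff_meas hE hgm hg] with x hx htend
  rw [← hIg]
  refine htend.congr fun n => ?_
  have : birkhoffSum T g n x = birkhoffSum T f n x := by
    unfold birkhoffSum
    exact Finset.sum_congr rfl fun j _ => (hx j).symm
  rw [this]

/-- If `u n / n → c` then `u (n - k) / n → c`. -/
lemma cc_tendsto_shift_div {u : ℕ → ℝ} {c : ℝ}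
    (h : Tendsto (fun n : ℕ => u n / n) atTop (nhds c)) (k : ℕ) :
    Tendsto (fun n : ℕ => u (n - k) / n) atTop (nhds c) := by
  have h1 : Tendsto (fun n : ℕ => u (n - k) / ((n - k : ℕ) : ℝ)) atTop (nhds c) :=
    h.comp (tendsto_sub_atTop_nat k)
  have h2 : Tendsto (fun n : ℕ => ((n - k : ℕ) : ℝ) / (n : ℝ)) atTop (nhds 1) := by
    have haux : Tendsto (fun n : ℕ => 1 - (k : ℝ) / n) atTop (nhds 1) := by
      have := (tendsto_const_div_atTop_nhds_zero_nat (k : ℝ)).const_sub 1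
      simpa using this
    refine haux.congr' ?_
    filter_upwards [eventually_ge_atTop (k + 1)] with n hn
    have hk : k ≤ n := le_trans (Nat.le_succ k) hn
    have hn0 : (n : ℝ) ≠ 0 := by
      have : 0 < n := lt_of_lt_of_le (Nat.succ_pos k) hn
      exact_mod_cast this.ne'
    rw [Nat.cast_sub hk]
    field_simp
  have h3 := h1.mul h2
  rw [mul_one] at h3
  refine h3.congr' ?_
  filter_upwards [eventually_ge_atTop (k + 1)] with n hn
  have hb : ((n - k : ℕ) : ℝ) ≠ 0 := by
    have : 0 < n - k := by omega
    exact_mod_cast this.ne'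
  rw [div_mul_div_comm, mul_comm (u (n - k)) (((n - k : ℕ) : ℝ)), mul_div_mul_left _ _ hb]

end BirkhoffDev

/-- Ergodic lemma: if `(φ_k)_{k ≥ 1}` is a sequence in `L¹` with `∑_k ‖φ_k‖₁ < ∞`, then
for a.e. `x`, `(1/n) ∑_{k=1}^{n-1} ∑_{j=0}^{n-k-1} φ_k(T^j x) → ∑_{k≥1} ∫ φ_k dμ`.
(Here `φ k` stands for the paper's `φ_{k+1}`, so `k` runs over all of `ℕ`.) -/
theorem stmt16 {X : Type*} [MeasurableSpace X] (μ : Measure X) [IsProbabilityMeasure μ]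
    (T : X → X) (hT : Ergodic T μ)
    (φ : ℕ → X → ℝ)
    (hint : ∀ k, Integrable (φ k) μ)
    (hsum : Summable fun k => ∫ x, |φ k x| ∂μ) :
    ∀ᵐ x ∂μ, Tendsto (fun n : ℕ =>
        (1 / (n : ℝ)) * ∑ k ∈ Finset.range (n - 1),
          ∑ j ∈ Finset.range (n - 1 - k), φ k (T^[j] x))
      atTop (nhds (∑' k : ℕ, ∫ x, φ k x ∂μ)) := by
  classical
  set c : ℕ → ℝ := fun k => ∫ x, |φ k x| ∂μ with hc
  have hcs : Summable c := hsum
  have hc0 : ∀ k, 0 ≤ c k := fun k => integral_nonneg fun x => abs_nonneg _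
  set I : ℕ → ℝ := fun k => ∫ x, φ k x ∂μ with hI
  have hIs : Summable I := by
    refine Summable.of_norm_bounded hcs fun k => ?_
    have h := norm_integral_le_integral_norm (μ := μ) (φ k)
    simpa [Real.norm_eq_abs] using h
  set L : ℝ := ∑' k, I k with hL
  set e : ℕ → X → ENNReal := fun k x => (‖φ k x‖₊ : ENNReal) with he
  have hem : ∀ k, AEMeasurable (e k) μ := fun k => (hint k).aemeasurable.enorm
  set Ψ : ℕ → X → ENNReal := fun K x => ∑' k, e (k + K) x with hΨ
  have hΨm : ∀ K, AEMeasurable (Ψ K) μ := fun K =>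
    AEMeasurable.ennreal_tsum fun k => hem (k + K)
  set t : ℕ → ℝ := fun K => ∑' k, c (k + K) with ht
  have htsummable : ∀ K, Summable fun k => c (k + K) := fun K => (summable_nat_add_iff K).2 hcs
  have ht0 : ∀ K, 0 ≤ t K := fun K => tsum_nonneg fun k => hc0 _
  have hlint : ∀ K, ∫⁻ x, Ψ K x ∂μ = ENNReal.ofReal (t K) := by
    intro K
    rw [hΨ]
    simp only
    rw [lintegral_tsum fun k => hem (k + K)]
    have h1 : ∀ j, ∫⁻ x, e j x ∂μ = ENNReal.ofReal (c j) := by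
      intro j
      rw [hc]
      simp only
      rw [show (∫⁻ x, e j x ∂μ) = ∫⁻ x, ‖φ j x‖ₑ ∂μ from rfl, ← ofReal_integral_norm_eq_lintegral_enorm (hint j)]
      simp [Real.norm_eq_abs]
    simp_rw [h1]
    rw [← ENNReal.ofReal_tsum_of_nonneg (fun k => hc0 _) (htsummable K)]
  have hlt : ∀ K, ∫⁻ x, Ψ K x ∂μ ≠ ⊤ := fun K => by rw [hlint K]; exact ENNReal.ofReal_ne_top
  set ψ : ℕ → X → ℝ := fun K x => (Ψ K x).toReal with hψ
  have hψint : ∀ K, Integrable (ψ K) μ := fun K =>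
    integrable_toReal_of_lintegral_ne_top (hΨm K) (hlt K)
  have hψval : ∀ K, ∫ x, ψ K x ∂μ = t K := by
    intro K
    rw [hψ]
    simp only
    rw [integral_toReal (hΨm K) (ae_lt_top' (hΨm K) (hlt K)), hlint K,
      ENNReal.toReal_ofReal (ht0 K)]
  have httend : Tendsto t atTop (nhds 0) := by
    have h1 : ∀ K, t K = (∑' k, c k) - ∑ k ∈ Finset.range K, c k := by
      intro K
      have h := Summable.sum_add_tsum_nat_add K hcs
      rw [ht]
      simp only
      linarith [h]
    have h2 : Tendsto (fun K : ℕ => (∑' k, c k) - ∑ k ∈ Finset.range K, c k) atTop (nhds 0) := by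
      have h3 := (tendsto_const_nhds :
        Tendsto (fun _ : ℕ => (∑' k, c k)) atTop (nhds (∑' k, c k))).sub
        hcs.hasSum.tendsto_sum_nat
      simpa using h3
    exact h2.congr fun K => (h1 K).symm
  have hΨle : ∀ (K : ℕ) (y : X), Ψ K y ≤ Ψ 0 y := by
    intro K y
    have h := ENNReal.tsum_comp_le_tsum_of_injective
      (f := fun k : ℕ => k + K) (add_left_injective K) (fun j => e j y)
    calc Ψ K y = ∑' k, e (k + K) y := rfl
      _ ≤ ∑' j, e j y := h
      _ = Ψ 0 y := by simp [hΨ]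
  have hpt : ∀ y : X, Ψ 0 y ≠ ⊤ → ∀ K M : ℕ,
      ∑ k ∈ Finset.range M, |φ (K + k) y| ≤ ψ K y := by
    intro y hy K M
    have hKy : Ψ K y ≠ ⊤ := ne_top_of_le_ne_top hy (hΨle K y)
    have h1 : ∀ j : ℕ, |φ j y| = (e j y).toReal := by
      intro j
      simp [he, Real.norm_eq_abs]
    calc ∑ k ∈ Finset.range M, |φ (K + k) y|
        = ∑ k ∈ Finset.range M, (e (K + k) y).toReal :=
          Finset.sum_congr rfl fun k _ => h1 (K + k)
      _ = (∑ k ∈ Finset.range M, e (K + k) y).toReal :=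
          (ENNReal.toReal_sum fun k _ => ENNReal.coe_ne_top).symm
      _ ≤ (Ψ K y).toReal := by
          refine ENNReal.toReal_mono hKy ?_
          have hcomm : ∑ k ∈ Finset.range M, e (K + k) y
              = ∑ k ∈ Finset.range M, e (k + K) y :=
            Finset.sum_congr rfl fun k _ => by rw [Nat.add_comm]
          rw [hcomm]
          exact ENNReal.sum_le_tsum _
      _ = ψ K y := rfl
  have hB1 : ∀ᵐ x ∂μ, ∀ k : ℕ,
      Tendsto (fun n : ℕ => birkhoffSum T (φ k) n x / n) atTop (nhds (I k)) :=
    ae_all_iff.2 fun k => cc_birkhoff hT (hint k)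
  have hB2 : ∀ᵐ x ∂μ, ∀ K : ℕ,
      Tendsto (fun n : ℕ => birkhoffSum T (ψ K) n x / n) atTop (nhds (t K)) := by
    rw [ae_all_iff]
    intro K
    have h := cc_birkhoff hT (hψint K)
    rwa [hψval K] at h
  have horb : ∀ᵐ x ∂μ, ∀ j : ℕ, Ψ 0 (T^[j] x) ≠ ⊤ := by
    rw [ae_all_iff]
    intro j
    have h := ae_lt_top' (hΨm 0) (hlt 0)
    rw [ae_iff] at h
    have hN : μ {y | Ψ 0 y = ⊤} = 0 := by
      have hs : {y | Ψ 0 y = ⊤} = {y | ¬ Ψ 0 y < ⊤} := by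
        ext y; simp [lt_top_iff_ne_top]
      rw [hs]; exact h
    have hpre := (hT.toMeasurePreserving.iterate j).quasiMeasurePreserving.preimage_null hN
    rw [ae_iff]
    have hset : {x | ¬ Ψ 0 (T^[j] x) ≠ ⊤} = T^[j] ⁻¹' {y | Ψ 0 y = ⊤} := by
      ext x; simp
    rw [hset]
    exact hpre
  filter_upwards [hB1, hB2, horb] with x h1 h2 h3
  have hbs : ∀ (g : X → ℝ) (m : ℕ) (y : X),
      birkhoffSum T g m y = ∑ j ∈ Finset.range m, g (T^[j] y) := fun _ _ _ => rfl
  rw [Metric.tendsto_atTop]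
  intro ε hε
  have hKev : ∀ᶠ K : ℕ in atTop, t K < ε / 4 ∧ |∑ k ∈ Finset.range K, I k - L| < ε / 4 := by
    have e1 : ∀ᶠ K in atTop, t K < ε / 4 := httend.eventually_lt_const (by positivity)
    have e2 : ∀ᶠ K in atTop, |∑ k ∈ Finset.range K, I k - L| < ε / 4 := by
      obtain ⟨N, hN⟩ := (Metric.tendsto_atTop.1 hIs.hasSum.tendsto_sum_nat) (ε / 4) (by positivity)
      rw [eventually_atTop]
      refine ⟨N, fun K hK => ?_⟩
      have := hN K hK
      rwa [Real.dist_eq] at this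
    exact e1.and e2
  obtain ⟨K, hK1, hK2⟩ := hKev.exists
  set SK : ℝ := ∑ k ∈ Finset.range K, I k with hSK
  have hA : Tendsto (fun n : ℕ => ∑ k ∈ Finset.range K,
      (birkhoffSum T (φ k) (n - 1 - k) x / n)) atTop (nhds SK) := by
    refine tendsto_finset_sum _ fun k _ => ?_
    have h := cc_tendsto_shift_div (h1 k) (1 + k)
    refine h.congr fun n => ?_
    rw [Nat.sub_sub]
  have hC : Tendsto (fun n : ℕ => birkhoffSum T (ψ K) (n - 1) x / n) atTop (nhds (t K)) :=
    cc_tendsto_shift_div (h2 K) 1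
  have hCev : ∀ᶠ n : ℕ in atTop, birkhoffSum T (ψ K) (n - 1) x / n < t K + ε / 4 :=
    hC.eventually_lt_const (by linarith)
  have hAev : ∀ᶠ n : ℕ in atTop, |∑ k ∈ Finset.range K,
      (birkhoffSum T (φ k) (n - 1 - k) x / n) - SK| < ε / 4 := by
    obtain ⟨N, hN⟩ := (Metric.tendsto_atTop.1 hA) (ε / 4) (by positivity)
    rw [eventually_atTop]
    refine ⟨N, fun n hn => ?_⟩
    have := hN n hn
    rwa [Real.dist_eq] at this
  have hfinal : ∀ᶠ n : ℕ in atTop, dist ((1 / (n : ℝ)) * ∑ k ∈ Finset.range (n - 1),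
      ∑ j ∈ Finset.range (n - 1 - k), φ k (T^[j] x)) L < ε := by
    filter_upwards [hCev, hAev, eventually_ge_atTop (K + 2)] with n hCn hAn hn
    have hn0 : (0 : ℝ) < n := by
      have : 0 < n := by omega
      exact_mod_cast this
    set W : ℝ := ∑ k ∈ Finset.range (n - 1), ∑ j ∈ Finset.range (n - 1 - k), φ k (T^[j] x)
      with hW
    set F : ℝ := ∑ k ∈ Finset.range K, birkhoffSum T (φ k) (n - 1 - k) x with hF
    set R : ℝ := ∑ k ∈ Finset.Ico K (n - 1), birkhoffSum T (φ k) (n - 1 - k) x with hR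
    have hsplit : F + R = W := by
      rw [hW, hF, hR]
      have hKn : K ≤ n - 1 := by omega
      have := Finset.sum_range_add_sum_Ico
        (fun k => birkhoffSum T (φ k) (n - 1 - k) x) hKn
      rw [this]
      exact Finset.sum_congr rfl fun k _ => hbs _ _ _
    have hRb : |R| ≤ birkhoffSum T (ψ K) (n - 1) x := by
      calc |R| ≤ ∑ k ∈ Finset.Ico K (n - 1), |birkhoffSum T (φ k) (n - 1 - k) x| :=
            Finset.abs_sum_le_sum_abs _ _
        _ ≤ ∑ k ∈ Finset.Ico K (n - 1), ∑ j ∈ Finset.range (n - 1), |φ k (T^[j] x)| := by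
            refine Finset.sum_le_sum fun k _ => ?_
            calc |birkhoffSum T (φ k) (n - 1 - k) x|
                ≤ ∑ j ∈ Finset.range (n - 1 - k), |φ k (T^[j] x)| := by
                  rw [hbs]
                  exact Finset.abs_sum_le_sum_abs _ _
              _ ≤ ∑ j ∈ Finset.range (n - 1), |φ k (T^[j] x)| :=
                  Finset.sum_le_sum_of_subset_of_nonneg
                    (Finset.range_subset_range.2 (Nat.sub_le _ _)) fun j _ _ => abs_nonneg _
        _ = ∑ j ∈ Finset.range (n - 1), ∑ k ∈ Finset.Ico K (n - 1), |φ k (T^[j] x)| :=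
            Finset.sum_comm
        _ ≤ ∑ j ∈ Finset.range (n - 1), ψ K (T^[j] x) := by
            refine Finset.sum_le_sum fun j _ => ?_
            calc ∑ k ∈ Finset.Ico K (n - 1), |φ k (T^[j] x)|
                = ∑ i ∈ Finset.range (n - 1 - K), |φ (K + i) (T^[j] x)| :=
                  Finset.sum_Ico_eq_sum_range _ _ _
              _ ≤ ψ K (T^[j] x) := hpt (T^[j] x) (h3 j) K (n - 1 - K)
        _ = birkhoffSum T (ψ K) (n - 1) x := (hbs _ _ _).symm
    have hFdiv : ∑ k ∈ Finset.range K, (birkhoffSum T (φ k) (n - 1 - k) x / n)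
        = F / n := (Finset.sum_div _ _ _).symm
    rw [hFdiv] at hAn
    have hRn : |R / n| ≤ birkhoffSum T (ψ K) (n - 1) x / n := by
      rw [abs_div, abs_of_pos hn0]
      gcongr
    have e2 : (1 / (n : ℝ)) * W - L = (F / n - SK) + R / n + (SK - L) := by
      rw [← hsplit]
      field_simp
      ring
    rw [Real.dist_eq, e2]
    have habs : |(F / n - SK) + R / n + (SK - L)|
        ≤ |F / n - SK| + |R / n| + |SK - L| := by
      calc |(F / n - SK) + R / n + (SK - L)|
          ≤ |(F / n - SK) + R / n| + |SK - L| := abs_add_le _ _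
        _ ≤ |F / n - SK| + |R / n| + |SK - L| := by
            have := abs_add_le (F / n - SK) (R / n)
            linarith
    have hSL : |SK - L| < ε / 4 := hK2
    linarith [hRn, hCn, hAn, habs, hK1]
  obtain ⟨N, hN⟩ := eventually_atTop.1 hfinal
  exact ⟨N, hN⟩
end

section
/- Let (X, μ, T) be a probability measure-preserving system with f : X → Z^d such that the cocycle (T, f) is recurrent and the cylinder map T̃_f(x, l) = (Tx, l + f(x)) is ergodic on X × Z^d with the product of μ and counting measure. Let (Ω, P, (θ^l)_{l ∈ Z^d}) be an ergodic measure-preserving Z^d-action. Then the skew product T_{θ,f}(x, ω) = (Tx, θ^{f(x)} ω) is ergodic on (X × Ω, μ × P). -/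
open Finset MeasureTheory Filter

/-- Ergodic sums `f_k(x) = ∑_{j<k} f(T^j x)`. -/
def ergSum {X : Type*} (d : ℕ) (T : X → X) (f : X → (Fin d → ℤ)) (k : ℕ) (x : X) :
    Fin d → ℤ :=
  ∑ j ∈ Finset.range k, f (T^[j] x)

/-- If the cocycle `(T, f)` is recurrent and the cylinder map
`T̃_f(x, l) = (Tx, l + f(x))` is ergodic for `μ × counting`, then for any ergodic
measure-preserving `ℤ^d`-action `θ` on `(Ω, P)`, the skew product
`T_{θ,f}(x, ω) = (Tx, θ^{f(x)} ω)` is ergodic for `μ × P`. -/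
theorem stmt19 {X : Type*} [MeasurableSpace X] (μ : Measure X) [IsProbabilityMeasure μ]
    (T : X → X) (hT : MeasurePreserving T μ μ)
    (d : ℕ) (f : X → (Fin d → ℤ)) (hf : Measurable f)
    (hrec : ∀ᵐ x ∂μ, {k : ℕ | 1 ≤ k ∧ ergSum d T f k x = 0}.Infinite)
    (hcyl : Ergodic (fun p : X × (Fin d → ℤ) => (T p.1, p.2 + f p.1))
      (μ.prod (Measure.count : Measure (Fin d → ℤ))))
    {Ω : Type*} [MeasurableSpace Ω] (P : Measure Ω) [IsProbabilityMeasure P]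
    (θ : (Fin d → ℤ) → Ω → Ω)
    (hθmp : ∀ l, MeasurePreserving (θ l) P P)
    (hθ0 : θ 0 = id)
    (hθadd : ∀ l l', θ (l + l') = θ l ∘ θ l')
    (hθerg : ∀ s : Set Ω, MeasurableSet s → (∀ l, θ l ⁻¹' s = s) →
      P s = 0 ∨ P s = 1) :
    Ergodic (fun p : X × Ω => (T p.1, θ (f p.1) p.2)) (μ.prod P) := by
  haveI : SigmaFinite (Measure.count : Measure (Fin d → ℤ)) := by
    apply Measure.sigmaFinite_of_countable (S := Set.range (fun l : Fin d → ℤ => ({l} : Set (Fin d → ℤ))))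
    · exact Set.countable_range _
    · rintro s ⟨l, rfl⟩
      rw [Measure.count_singleton]
      exact ENNReal.one_lt_top
    · ext l
      simp only [Set.mem_sUnion, Set.mem_range, Set.mem_univ, iff_true]
      exact ⟨{l}, ⟨l, rfl⟩, rfl⟩
  -- measurability of the action as a function of two arguments
  have hθm2' : Measurable fun q : Ω × (Fin d → ℤ) => θ q.2 q.1 :=
    measurable_from_prod_countable_left fun l => (hθmp l).measurable
  have hθm2 : Measurable fun q : (Fin d → ℤ) × Ω => θ q.1 q.2 :=
    hθm2'.comp measurable_swap
  have hgm : Measurable (Function.uncurry fun x : X => θ (f x)) := by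
    have : (Function.uncurry fun x : X => θ (f x)) =
        (fun q : (Fin d → ℤ) × Ω => θ q.1 q.2) ∘ (fun p : X × Ω => (f p.1, p.2)) := rfl
    rw [this]
    exact hθm2.comp ((hf.comp measurable_fst).prodMk measurable_snd)
  have hmp : MeasurePreserving (fun p : X × Ω => (T p.1, θ (f p.1) p.2))
      (μ.prod P) (μ.prod P) :=
    hT.skew_product hgm (Filter.Eventually.of_forall fun x => (hθmp (f x)).map_eq)
  refine ⟨hmp, ?_⟩
  constructor
  intro s hs hsinv
  -- pointwise invariance of s
  have hsinv' : ∀ q : X × Ω, (T q.1, θ (f q.1) q.2) ∈ s ↔ q ∈ s := fun q =>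
    Set.ext_iff.1 hsinv q
  -- key dichotomy for each ω, from ergodicity of the cylinder map
  have hdich : ∀ ω : Ω, (∀ l, μ {x | (x, θ l ω) ∈ s} = 0) ∨
      (∀ l, μ {x | (x, θ l ω) ∈ s}ᶜ = 0) := by
    intro ω
    set A : Set (X × (Fin d → ℤ)) :=
      (fun p : X × (Fin d → ℤ) => (p.1, θ p.2 ω)) ⁻¹' s with hA
    have hAm : MeasurableSet A := by
      apply hs.preimage
      exact measurable_fst.prodMk
        ((measurable_of_countable (fun l => θ l ω)).comp measurable_snd)
    have hAinv : (fun p : X × (Fin d → ℤ) => (T p.1, p.2 + f p.1)) ⁻¹' A = A := by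
      ext p
      simp only [hA, Set.mem_preimage]
      have h1 : θ (p.2 + f p.1) ω = θ (f p.1) (θ p.2 ω) := by
        rw [add_comm, hθadd]; rfl
      rw [h1]
      exact hsinv' (p.1, θ p.2 ω)
    rcases hcyl.ae_empty_or_univ hAm hAinv with h | h
    · left
      intro l
      have hsub : ({x | (x, θ l ω) ∈ s} ×ˢ ({l} : Set (Fin d → ℤ))) ⊆ A := by
        rintro ⟨x, l'⟩ ⟨hx, hl⟩
        simp only [Set.mem_singleton_iff] at hl
        subst hl
        exact hx
      have h0 : (μ.prod (Measure.count : Measure (Fin d → ℤ))) A = 0 :=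
        (ae_eq_empty).1 h
      have : (μ.prod (Measure.count : Measure (Fin d → ℤ)))
          ({x | (x, θ l ω) ∈ s} ×ˢ ({l} : Set (Fin d → ℤ))) ≤
          (μ.prod (Measure.count : Measure (Fin d → ℤ))) A := measure_mono hsub
      rw [h0, Measure.prod_prod, Measure.count_singleton, mul_one] at this
      exact le_antisymm (by simpa using this) (zero_le)
    · right
      intro l
      have hsub : ({x | (x, θ l ω) ∈ s}ᶜ ×ˢ ({l} : Set (Fin d → ℤ))) ⊆ Aᶜ := by
        rintro ⟨x, l'⟩ ⟨hx, hl⟩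
        simp only [Set.mem_singleton_iff] at hl
        subst hl
        exact hx
      have h0 : (μ.prod (Measure.count : Measure (Fin d → ℤ))) Aᶜ = 0 :=
        (ae_eq_univ).1 h
      have : (μ.prod (Measure.count : Measure (Fin d → ℤ)))
          ({x | (x, θ l ω) ∈ s}ᶜ ×ˢ ({l} : Set (Fin d → ℤ))) ≤
          (μ.prod (Measure.count : Measure (Fin d → ℤ))) Aᶜ := measure_mono hsub
      rw [h0, Measure.prod_prod, Measure.count_singleton, mul_one] at this
      exact le_antisymm (by simpa using this) (zero_le)
  -- sections are measurable
  have hsecm : ∀ ω, MeasurableSet {x | (x, ω) ∈ s} := fun ω =>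
    hs.preimage (measurable_id.prodMk measurable_const)
  -- each section has measure 0 or 1
  have hsec01 : ∀ ω, μ {x | (x, ω) ∈ s} = 0 ∨ μ {x | (x, ω) ∈ s} = 1 := by
    intro ω
    rcases hdich ω with h | h
    · left; have := h 0; rwa [hθ0] at this
    · right
      have h0 := h 0
      rw [hθ0] at h0
      have hc : μ {x | (x, ω) ∈ s}ᶜ = 0 := h0
      exact (prob_compl_eq_zero_iff (hsecm ω)).1 hc
  -- the set of ω with full section
  set E : Set Ω := {ω | μ {x | (x, ω) ∈ s} = 1} with hE
  have hEm : MeasurableSet E := by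
    have : Measurable fun ω => μ ((fun x => (x, ω)) ⁻¹' s) :=
      measurable_measure_prodMk_right hs
    exact this (measurableSet_singleton 1)
  have hEinv : ∀ l, θ l ⁻¹' E = E := by
    intro l
    ext ω
    simp only [hE, Set.mem_preimage, Set.mem_setOf_eq]
    rcases hdich ω with h | h
    · have h1 := h l
      have h2 := h 0
      rw [hθ0] at h2
      simp only [id] at h2
      constructor
      · intro hx; rw [h1] at hx; exact absurd hx.symm one_ne_zero
      · intro hx; rw [h2] at hx; exact absurd hx.symm one_ne_zero
    · have h1 : μ {x | (x, θ l ω) ∈ s} = 1 :=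
        (prob_compl_eq_zero_iff (hsecm (θ l ω))).1 (h l)
      have h2 : μ {x | (x, ω) ∈ s} = 1 := by
        have h0 := h 0
        rw [hθ0] at h0
        exact (prob_compl_eq_zero_iff (hsecm ω)).1 h0
      simp [h1, h2]
  -- measure of s equals P E
  have hmeas : (μ.prod P) s = P E := by
    rw [Measure.prod_apply_symm hs]
    have : ∀ ω, μ ((fun x => (x, ω)) ⁻¹' s) = E.indicator (fun _ => 1) ω := by
      intro ω
      rcases hsec01 ω with h | h
      · have hω : ω ∉ E := by simp [hE, h]
        rw [Set.indicator_of_notMem hω]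
        exact h
      · have hω : ω ∈ E := h
        rw [Set.indicator_of_mem hω]
        exact h
    simp_rw [this]
    rw [lintegral_indicator hEm]
    simp
  rw [Filter.eventuallyConst_set']
  rcases hθerg E hEm hEinv with h | h
  · left
    rw [ae_eq_empty, hmeas, h]
  · right
    rw [ae_eq_univ]
    have hst : (μ.prod P) s = 1 := by rw [hmeas, h]
    exact (prob_compl_eq_zero_iff hs).2 hst
end
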